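/- arXiv:1502.01483 — 4 statements merged into one kernel-verified Lean document; each statement's English description precedes it below -/
import Mathlib

section
/- For 0 < s < 1 and three distinct points x1, x2, x3 in R^d, the symmetrized quantity p_s(x1,x2,x3) = (1/2) * sum over the six permutations sigma of {1,2,3} of the scalar product of (x_{sigma(2)}-x_{sigma(1)})/|x_{sigma(2)}-x_{sigma(1)}|^{1+s} with (x_{sigma(3)}-x_{sigma(1)})/|x_{sigma(3)}-x_{sigma(1)}|^{1+s} is comparable, with constants depending only on s and d, to 1/max(|x1-x2|, |x1-x3|, |x2-x3|)^{2s}. -/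
set_option maxHeartbeats 1000000

open MeasureTheory Metric

/-- The `s`-Riesz kernel `K^s(x) = x / |x|^{1+s}` on `ℝ^d`. -/
noncomputable def rieszK (d : ℕ) (s : ℝ) (x : EuclideanSpace ℝ (Fin d)) :
    EuclideanSpace ℝ (Fin d) :=
  ‖x‖ ^ (-(1 + s)) • x

/-- The symmetrized permutation quantity
`p_s(x₁,x₂,x₃) = (1/2) ∑_σ K^s(x_{σ(2)}-x_{σ(1)}) · K^s(x_{σ(3)}-x_{σ(1)})`. -/
noncomputable def pperm (d : ℕ) (s : ℝ) (w : Fin 3 → EuclideanSpace ℝ (Fin d)) : ℝ :=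
  (1 / 2) * ∑ σ : Equiv.Perm (Fin 3),
    inner ℝ (rieszK d s (w (σ 1) - w (σ 0))) (rieszK d s (w (σ 2) - w (σ 0)))

noncomputable def Fq (s a b c : ℝ) : ℝ :=
  (b^2 + c^2 - a^2) * a^(1+s) + (a^2 + c^2 - b^2) * b^(1+s) + (a^2 + b^2 - c^2) * c^(1+s)

-- refined subadditivity
lemma subadd_refined {s a b : ℝ} (hs : 0 < s) (hs1 : s < 1) (ha : 0 < a) (hab : a ≤ b) :
    (a+b)^s ≤ ((2:ℝ)^s - 1) * a^s + b^s := by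
  have hconc := Real.concaveOn_rpow hs.le hs1.le
  have hb : 0 < b := lt_of_lt_of_le ha hab
  have hl : (0:ℝ) ≤ a / b := by positivity
  have hm : (0:ℝ) ≤ (b - a) / b := by
    apply div_nonneg (by linarith) hb.le
  have hsum : a/b + (b-a)/b = 1 := by field_simp; ring
  have h1 := hconc.2 (Set.mem_Ici.2 ha.le) (Set.mem_Ici.2 (by positivity : (0:ℝ) ≤ a + b)) hl hm hsum
  have h2 := hconc.2 (Set.mem_Ici.2 ha.le) (Set.mem_Ici.2 (by positivity : (0:ℝ) ≤ a + b)) hm hl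
    (by linarith [hsum])
  simp only [smul_eq_mul] at h1 h2
  have e1 : a/b * a + (b-a)/b * (a+b) = b := by field_simp; ring
  have e2 : (b-a)/b * a + a/b * (a+b) = 2*a := by field_simp; ring
  rw [e1] at h1
  rw [e2] at h2
  have h2a : ((2:ℝ)*a)^s = (2:ℝ)^s * a^s := Real.mul_rpow (by norm_num) ha.le
  rw [h2a] at h2
  have e3 : a/b*a^s + (b-a)/b*a^s = a^s := by rw [← add_mul, hsum, one_mul]
  have e4 : a/b*(a+b)^s + (b-a)/b*(a+b)^s = (a+b)^s := by rw [← add_mul, hsum, one_mul]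
  linarith

lemma Fq_lower {s a b c : ℝ} (hs : 0 < s) (hs1 : s < 1) (ha : 0 < a) (hab : a ≤ b)
    (hbc : b ≤ c) (htri : c ≤ a + b) :
    min (1:ℝ) (2*(2 - (2:ℝ)^s)) * (a^(1+s) * b^2) ≤ Fq s a b c := by
  have hb : 0 < b := lt_of_lt_of_le ha hab
  have hc : 0 < c := lt_of_lt_of_le hb hbc
  set p : ℝ := (1+s)/2 with hp
  set q : ℝ := (3+s)/2 with hq
  have hA : 0 < a^(1+s) := Real.rpow_pos_of_pos ha _
  have hB : 0 < b^(1+s) := Real.rpow_pos_of_pos hb _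
  -- square-to-rpow conversions
  have hsq : ∀ x : ℝ, 0 < x → (x^2 : ℝ)^p = x^(1+s) := by
    intro x hx
    rw [← Real.rpow_natCast x 2, ← Real.rpow_mul hx.le]
    congr 1
    rw [hp]; push_cast; ring
  have hsq' : ∀ x : ℝ, 0 < x → (x^2 : ℝ)^q = x^2 * x^(1+s) := by
    intro x hx
    rw [← Real.rpow_natCast x 2, ← Real.rpow_mul hx.le]
    have h2q : ((2:ℕ):ℝ) * q = 2 + (1+s) := by rw [hq]; push_cast; ring
    rw [h2q, Real.rpow_add hx]
    norm_num
  -- the concave function G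
  set G : ℝ → ℝ := fun u => (b^2 - a^2)*a^(1+s) + (a^2 - b^2)*b^(1+s)
      + (a^(1+s) + b^(1+s))*u + (a^2+b^2)*u^p - u^q with hG
  have hGx : ∀ x : ℝ, 0 < x → G (x^2) = Fq s a b x := by
    intro x hx
    rw [hG]; simp only
    rw [hsq x hx, hsq' x hx, Fq]; ring
  -- weights
  have hden : (0:ℝ) < (a+b)^2 - b^2 := by nlinarith
  set l : ℝ := ((a+b)^2 - c^2)/((a+b)^2 - b^2) with hl
  set m : ℝ := (c^2 - b^2)/((a+b)^2 - b^2) with hm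
  have hl0 : 0 ≤ l := by
    apply div_nonneg _ hden.le; nlinarith
  have hm0 : 0 ≤ m := by
    apply div_nonneg _ hden.le; nlinarith
  have hlm : l + m = 1 := by rw [hl, hm]; field_simp; ring
  have hpt : l * b^2 + m * (a+b)^2 = c^2 := by rw [hl, hm]; field_simp; ring
  -- concavity/convexity at the three points
  have hb2 : (0:ℝ) ≤ b^2 := by positivity
  have hab2 : (0:ℝ) ≤ (a+b)^2 := by positivity
  have hconc := (Real.concaveOn_rpow (p := p) (by rw [hp]; linarith) (by rw [hp]; linarith)).2
    (Set.mem_Ici.2 hb2) (Set.mem_Ici.2 hab2) hl0 hm0 hlm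
  have hconv := (convexOn_rpow (p := q) (by rw [hq]; linarith)).2
    (Set.mem_Ici.2 hb2) (Set.mem_Ici.2 hab2) hl0 hm0 hlm
  simp only [smul_eq_mul] at hconc hconv
  rw [hpt] at hconc hconv
  -- G is above the weighted average of endpoints
  have hGmid : l * G (b^2) + m * G ((a+b)^2) ≤ G (c^2) := by
    have key : G (c^2) - (l * G (b^2) + m * G ((a+b)^2))
        = (a^2+b^2)*((c^2)^p - (l*(b^2)^p + m*((a+b)^2)^p))
          - ((c^2)^q - (l*(b^2)^q + m*((a+b)^2)^q)) := by
      rw [hG]; simp only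
      linear_combination (-((b^2-a^2)*a^(1+s) + (a^2-b^2)*b^(1+s))) * hlm
        + (-(a^(1+s)+b^(1+s))) * hpt
    have d1 : 0 ≤ (c^2)^p - (l*(b^2)^p + m*((a+b)^2)^p) := by linarith [hconc]
    have d2 : (c^2)^q - (l*(b^2)^q + m*((a+b)^2)^q) ≤ 0 := by linarith [hconv]
    have d3 : 0 ≤ (a^2+b^2) * ((c^2)^p - (l*(b^2)^p + m*((a+b)^2)^p)) :=
      mul_nonneg (by positivity) d1
    linarith [key]
  -- endpoint values
  have hend1 : a^(1+s) * b^2 ≤ G (b^2) := by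
    have heq := hGx b hb
    rw [heq, Fq]
    have hba : 0 ≤ b^2 - a^2 := by nlinarith
    nlinarith [mul_nonneg hba hA.le, mul_nonneg (sq_nonneg a) hB.le]
  have hend2 : 2*(2 - (2:ℝ)^s) * (a^(1+s) * b^2) ≤ G ((a+b)^2) := by
    have habp : 0 < a + b := by linarith
    have h1 : G ((a+b)^2) = Fq s a b (a+b) := hGx (a+b) habp
    have hsub := subadd_refined hs hs1 ha hab
    have hxs : ∀ x : ℝ, 0 < x → x^(1+s) = x * x^s := by
      intro x hx
      rw [Real.rpow_add hx, Real.rpow_one]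
    have h2 : Fq s a b (a+b) = 2*a*b*(a+b)*(a^s + b^s - (a+b)^s) := by
      rw [Fq, hxs a ha, hxs b hb, hxs (a+b) habp]; ring
    rw [h1, h2]
    have has : 0 < a^s := Real.rpow_pos_of_pos ha _
    have h3 : (2 - (2:ℝ)^s) * a^s ≤ a^s + b^s - (a+b)^s := by
      have hbs := Real.rpow_le_rpow ha.le hab hs.le
      linarith
    have h4 : a * a^s = a^(1+s) := (hxs a ha).symm
    have h2s : 0 < 2 - (2:ℝ)^s := by
      have h2slt : (2:ℝ)^s < (2:ℝ)^(1:ℝ) := Real.rpow_lt_rpow_of_exponent_lt one_lt_two hs1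
      rw [Real.rpow_one] at h2slt
      linarith
    have h5 : 2*a*b*(a+b)*((2-(2:ℝ)^s)*a^s) ≤ 2*a*b*(a+b)*(a^s + b^s - (a+b)^s) :=
      mul_le_mul_of_nonneg_left h3 (by positivity)
    have hbab : b^2 ≤ b*(a+b) := by nlinarith
    have hgap : a^(1+s)*b^2 ≤ a*b*(a+b)*a^s := by
      calc a^(1+s)*b^2 ≤ a^(1+s)*(b*(a+b)) := mul_le_mul_of_nonneg_left hbab hA.le
        _ = (a*a^s)*(b*(a+b)) := by rw [h4]
        _ = a*b*(a+b)*a^s := by ring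
    calc 2*(2 - (2:ℝ)^s) * (a^(1+s) * b^2) ≤ 2*(2-(2:ℝ)^s)*(a*b*(a+b)*a^s) := by
          apply mul_le_mul_of_nonneg_left hgap (by linarith)
      _ = 2*a*b*(a+b)*((2-(2:ℝ)^s)*a^s) := by ring
      _ ≤ 2*a*b*(a+b)*(a^s + b^s - (a+b)^s) := h5
  -- combine
  have hFqc : G (c^2) = Fq s a b c := hGx c hc
  have hmin1 : min 1 (2*(2-(2:ℝ)^s)) ≤ 1 := min_le_left _ _
  have hmin2 : min 1 (2*(2-(2:ℝ)^s)) ≤ 2*(2-(2:ℝ)^s) := min_le_right _ _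
  have hX : (0:ℝ) ≤ a^(1+s) * b^2 := by positivity
  calc min (1:ℝ) (2*(2 - (2:ℝ)^s)) * (a^(1+s) * b^2)
      = l * (min 1 (2*(2-(2:ℝ)^s)) * (a^(1+s) * b^2)) + m * (min 1 (2*(2-(2:ℝ)^s)) * (a^(1+s) * b^2)) := by
        rw [← add_mul, hlm, one_mul]
    _ ≤ l * G (b^2) + m * G ((a+b)^2) := by
        apply add_le_add
        · exact mul_le_mul_of_nonneg_left (le_trans (mul_le_mul_of_nonneg_right hmin1 hX) (by linarith)) hl0
        · exact mul_le_mul_of_nonneg_left (le_trans (mul_le_mul_of_nonneg_right hmin2 hX) hend2) hm0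
    _ ≤ G (c^2) := hGmid
    _ = Fq s a b c := hFqc

lemma Fq_upper {s a b c : ℝ} (hs : 0 < s) (hs1 : s < 1) (ha : 0 < a) (hab : a ≤ b)
    (hbc : b ≤ c) : Fq s a b c ≤ 4 * (a^(1+s) * c^2) := by
  have hb : 0 < b := lt_of_lt_of_le ha hab
  have hc : 0 < c := lt_of_lt_of_le hb hbc
  have hac : a ≤ c := le_trans hab hbc
  have hA : 0 < a^(1+s) := Real.rpow_pos_of_pos ha _
  have hB : 0 < b^(1+s) := Real.rpow_pos_of_pos hb _
  have hC : 0 < c^(1+s) := Real.rpow_pos_of_pos hc _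
  have hBC : b^(1+s) ≤ c^(1+s) := Real.rpow_le_rpow hb.le hbc (by linarith)
  -- a^2 * c^(1+s) ≤ a^(1+s) * c^2
  have hkey : a^2 * c^(1+s) ≤ a^(1+s) * c^2 := by
    have e1 : a^2 = a^(1+s) * a^(1-s) := by
      rw [← Real.rpow_add ha, show (1+s)+(1-s) = ((2:ℕ):ℝ) by push_cast; ring,
        Real.rpow_natCast]
    have e2 : c^2 = c^(1+s) * c^(1-s) := by
      rw [← Real.rpow_add hc, show (1+s)+(1-s) = ((2:ℕ):ℝ) by push_cast; ring,
        Real.rpow_natCast]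
    have e3 : a^(1-s) ≤ c^(1-s) := Real.rpow_le_rpow ha.le hac (by linarith)
    calc a^2 * c^(1+s) = a^(1+s) * (a^(1-s) * c^(1+s)) := by rw [e1]; ring
      _ ≤ a^(1+s) * (c^(1-s) * c^(1+s)) := by
          apply mul_le_mul_of_nonneg_left (mul_le_mul_of_nonneg_right e3 hC.le) hA.le
      _ = a^(1+s) * c^2 := by rw [e2]; ring
  have hid : Fq s a b c = (b^2+c^2-a^2)*a^(1+s) + a^2*(b^(1+s)+c^(1+s))
      - (c^2-b^2)*(c^(1+s)-b^(1+s)) := by rw [Fq]; ring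
  have h1 : (b^2+c^2-a^2)*a^(1+s) ≤ 2*c^2*a^(1+s) := by
    apply mul_le_mul_of_nonneg_right _ hA.le
    nlinarith
  have h2 : a^2*(b^(1+s)+c^(1+s)) ≤ 2*(a^2*c^(1+s)) := by
    have := mul_le_mul_of_nonneg_left (add_le_add_right hBC (c^(1+s))) (sq_nonneg a)
    linarith
  have h3 : 0 ≤ (c^2-b^2)*(c^(1+s)-b^(1+s)) := by
    apply mul_nonneg _ (by linarith)
    nlinarith
  nlinarith [hkey]

noncomputable def Pq (s a b c : ℝ) : ℝ := Fq s a b c / (2 * (a*b*c)^(1+s))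

lemma Pq_bounds {s a b c : ℝ} (hs : 0 < s) (hs1 : s < 1) (ha : 0 < a) (hab : a ≤ b)
    (hbc : b ≤ c) (htri : c ≤ a + b) :
    min (1:ℝ) (2*(2 - (2:ℝ)^s)) / 4 * c^(-(2*s)) ≤ Pq s a b c ∧
      Pq s a b c ≤ 8 * c^(-(2*s)) := by
  have hb : 0 < b := lt_of_lt_of_le ha hab
  have hc : 0 < c := lt_of_lt_of_le hb hbc
  have hA : 0 < a^(1+s) := Real.rpow_pos_of_pos ha _
  have hB : 0 < b^(1+s) := Real.rpow_pos_of_pos hb _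
  have hC : 0 < c^(1+s) := Real.rpow_pos_of_pos hc _
  have hprod : (a*b*c)^(1+s) = a^(1+s) * b^(1+s) * c^(1+s) := by
    rw [Real.mul_rpow (by positivity) hc.le, Real.mul_rpow ha.le hb.le]
  have hden : 0 < 2 * (a*b*c)^(1+s) := by
    rw [hprod]; positivity
  -- c/2 ≤ b
  have hcb : c/2 ≤ b := by linarith
  -- c^(1-s) and c^(-(2*s)) relations
  have hcpow : c^(1-s) * c^(1+s) = c^2 := by
    rw [← Real.rpow_add hc, show (1-s)+(1+s) = ((2:ℕ):ℝ) by push_cast; ring,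
      Real.rpow_natCast]
  have hm2s : c^(-(2*s)) = c^(1-s) / c^(1+s) := by
    rw [← Real.rpow_sub hc, show (1-s)-(1+s) = -(2*s) by ring]
  have hc1s : 0 < c^(1-s) := Real.rpow_pos_of_pos hc _
  have hc2s : 0 < c^(-(2*s)) := Real.rpow_pos_of_pos hc _
  -- (c/2)^(1-s) ≥ c^(1-s)/2  and  (c/2)^(1+s) ≤ b^(1+s) etc
  have hhalf : c^(1-s)/2 ≤ b^(1-s) := by
    have h1 : (c/2)^(1-s) ≤ b^(1-s) := Real.rpow_le_rpow (by positivity) hcb (by linarith)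
    have h2 : (c/2)^(1-s) = c^(1-s) / 2^(1-s) := Real.div_rpow hc.le (by norm_num : (0:ℝ) ≤ 2) (1-s)
    have h3 : (2:ℝ)^(1-s) ≤ 2 := by
      have := Real.rpow_le_rpow_of_exponent_le (x := 2) one_le_two (by linarith : 1-s ≤ 1)
      rwa [Real.rpow_one] at this
    have h4 : c^(1-s)/2 ≤ c^(1-s)/2^(1-s) := by
      apply div_le_div_of_nonneg_left hc1s.le (by positivity) h3
    linarith [h2 ▸ h1]
  constructor
  · -- lower bound
    rw [Pq, le_div_iff₀ hden]
    have hlow := Fq_lower hs hs1 ha hab hbc htri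
    refine le_trans ?_ hlow
    -- suffices: κ/4 * c^(-(2s)) * (2 (abc)^(1+s)) ≤ κ * (a^(1+s) b^2)
    rw [hprod]
    set k := min (1:ℝ) (2*(2 - (2:ℝ)^s)) with hk
    have hk0 : 0 < k := by
      have h2slt : (2:ℝ)^s < (2:ℝ)^(1:ℝ) := Real.rpow_lt_rpow_of_exponent_lt one_lt_two hs1
      rw [Real.rpow_one] at h2slt
      apply lt_min one_pos (by linarith)
    -- b^2 ≥ b^(1+s) * c^(1-s) / 2
    have hbb : b^(1+s) * (c^(1-s)/2) ≤ b^2 := by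
      have e1 : b^2 = b^(1+s) * b^(1-s) := by
        rw [← Real.rpow_add hb, show (1+s)+(1-s) = ((2:ℕ):ℝ) by push_cast; ring,
          Real.rpow_natCast]
      rw [e1]
      exact mul_le_mul_of_nonneg_left hhalf hB.le
    calc k/4 * c^(-(2*s)) * (2 * (a^(1+s) * b^(1+s) * c^(1+s)))
        = k * (a^(1+s) * (b^(1+s) * (c^(-(2*s)) * c^(1+s) / 2))) := by ring
      _ = k * (a^(1+s) * (b^(1+s) * (c^(1-s)/2))) := by
          rw [hm2s]; field_simp
      _ ≤ k * (a^(1+s) * b^2) := by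
          apply mul_le_mul_of_nonneg_left _ hk0.le
          apply mul_le_mul_of_nonneg_left _ hA.le
          rw [← mul_div_assoc]
          rw [← mul_div_assoc] at hbb
          exact hbb
  · -- upper bound
    rw [Pq, div_le_iff₀ hden]
    have hup := Fq_upper hs hs1 ha hab hbc
    refine le_trans hup ?_
    rw [hprod]
    -- 4 a^(1+s) c^2 ≤ 8 c^(-2s) * 2 a^(1+s) b^(1+s) c^(1+s)
    -- i.e. c^2 ≤ 4 c^(1-s) b^(1+s), using c^2 = c^(1-s) c^(1+s) and c^(1+s) ≤ 4 b^(1+s)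
    have hcb4 : c^(1+s) ≤ 4 * b^(1+s) := by
      have h1 : c^(1+s) ≤ (2*b)^(1+s) := Real.rpow_le_rpow hc.le (by linarith) (by linarith)
      have h2 : ((2:ℝ)*b)^(1+s) = 2^(1+s) * b^(1+s) := Real.mul_rpow (by norm_num) hb.le
      have h3 : (2:ℝ)^(1+s) ≤ 4 := by
        have := Real.rpow_le_rpow_of_exponent_le (x := 2) one_le_two (by linarith : 1+s ≤ 2)
        have h4 : (2:ℝ)^((2:ℕ):ℝ) = 4 := by rw [Real.rpow_natCast]; norm_num
        calc (2:ℝ)^(1+s) ≤ 2^((2:ℕ):ℝ) := by push_cast at this ⊢; linarith [this]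
          _ = 4 := h4
      calc c^(1+s) ≤ 2^(1+s) * b^(1+s) := h2 ▸ h1
        _ ≤ 4 * b^(1+s) := mul_le_mul_of_nonneg_right h3 hB.le
    calc 4 * (a^(1+s) * c^2) = 4 * (a^(1+s) * (c^(1-s) * c^(1+s))) := by rw [hcpow]
      _ ≤ 4 * (a^(1+s) * (c^(1-s) * (4 * b^(1+s)))) := by
          apply mul_le_mul_of_nonneg_left _ (by norm_num)
          apply mul_le_mul_of_nonneg_left _ hA.le
          exact mul_le_mul_of_nonneg_left hcb4 hc1s.le
      _ = 8 * (c^(1-s)/c^(1+s)) * (2 * (a^(1+s) * b^(1+s) * c^(1+s))) := by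
          field_simp; ring
      _ = 8 * c^(-(2*s)) * (2 * (a^(1+s) * b^(1+s) * c^(1+s))) := by rw [hm2s]

lemma Pq_swap12 (s a b c : ℝ) : Pq s a b c = Pq s b a c := by
  rw [Pq, Pq, Fq, Fq, show b*a*c = a*b*c by ring]
  ring

lemma Pq_swap23 (s a b c : ℝ) : Pq s a b c = Pq s a c b := by
  rw [Pq, Pq, Fq, Fq, show a*c*b = a*b*c by ring]
  ring

lemma Pq_bounds_max {s : ℝ} (hs : 0 < s) (hs1 : s < 1) (x y z : ℝ)
    (hx : 0 < x) (hy : 0 < y) (hz : 0 < z)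
    (t1 : x ≤ y + z) (t2 : y ≤ x + z) (t3 : z ≤ x + y) :
    min (1:ℝ) (2*(2 - (2:ℝ)^s)) / 4 * (max x (max y z))^(-(2*s)) ≤ Pq s x y z ∧
      Pq s x y z ≤ 8 * (max x (max y z))^(-(2*s)) := by
  rcases le_total x y with hxy | hyx
  · rcases le_total y z with hyz | hzy
    · -- x ≤ y ≤ z
      rw [max_eq_right hyz, max_eq_right (le_trans hxy hyz)]
      exact Pq_bounds hs hs1 hx hxy hyz t3
    · rcases le_total x z with hxz | hzx
      · -- x ≤ z ≤ y
        rw [max_eq_left hzy, max_eq_right hxy, Pq_swap23]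
        exact Pq_bounds hs hs1 hx hxz hzy (by linarith)
      · -- z ≤ x ≤ y
        rw [max_eq_left hzy, max_eq_right hxy, Pq_swap23 s x y z, Pq_swap12]
        exact Pq_bounds hs hs1 hz hzx hxy (by linarith)
  · rcases le_total x z with hxz | hzx
    · -- y ≤ x ≤ z
      rw [max_eq_right (le_trans hyx hxz), max_eq_right hxz, Pq_swap12]
      exact Pq_bounds hs hs1 hy hyx hxz (by linarith)
    · rcases le_total y z with hyz | hzy
      · -- y ≤ z ≤ x
        rw [max_eq_right hyz, max_eq_left hzx, Pq_swap12 s x y z, Pq_swap23]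
        exact Pq_bounds hs hs1 hy hyz hzx (by linarith)
      · -- z ≤ y ≤ x
        rw [max_eq_left hzy, max_eq_left hyx, Pq_swap23 s x y z, Pq_swap12 s x z y,
          Pq_swap23 s z x y]
        exact Pq_bounds hs hs1 hz hzy hyx (by linarith)

lemma inner_rieszK (d : ℕ) (s : ℝ) (u v : EuclideanSpace ℝ (Fin d)) :
    (inner ℝ (rieszK d s u) (rieszK d s v) : ℝ) =
      ‖u‖ ^ (-(1+s)) * ‖v‖ ^ (-(1+s)) * ((‖u‖^2 + ‖v‖^2 - ‖u - v‖^2) / 2) := by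
  rw [rieszK, rieszK, real_inner_smul_left, real_inner_smul_right]
  have h : ‖u - v‖^2 = ‖u‖^2 - 2 * (inner ℝ u v : ℝ) + ‖v‖^2 := norm_sub_sq_real u v
  have h2 : (inner ℝ u v : ℝ) = (‖u‖^2 + ‖v‖^2 - ‖u - v‖^2) / 2 := by linarith
  rw [h2]; ring

lemma pperm_eq_Pq (d : ℕ) (s : ℝ) (w : Fin 3 → EuclideanSpace ℝ (Fin d))
    (hw : ∀ i j : Fin 3, i ≠ j → w i ≠ w j) :
    pperm d s w = Pq s (dist (w 0) (w 1)) (dist (w 0) (w 2)) (dist (w 1) (w 2)) := by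
  set a := dist (w 0) (w 1) with hadef
  set b := dist (w 0) (w 2) with hbdef
  set c := dist (w 1) (w 2) with hcdef
  have ha : 0 < a := dist_pos.2 (hw 0 1 (by decide))
  have hb : 0 < b := dist_pos.2 (hw 0 2 (by decide))
  have hc : 0 < c := dist_pos.2 (hw 1 2 (by decide))
  -- expand the sum over the six permutations
  have huniv : (Finset.univ : Finset (Equiv.Perm (Fin 3))) =
      {1, Equiv.swap 0 1, Equiv.swap 0 2, Equiv.swap 1 2,
       Equiv.swap 0 1 * Equiv.swap 1 2, Equiv.swap 1 2 * Equiv.swap 0 1} := by decide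
  rw [pperm, huniv]
  rw [Finset.sum_insert (by decide), Finset.sum_insert (by decide), Finset.sum_insert (by decide),
    Finset.sum_insert (by decide), Finset.sum_insert (by decide), Finset.sum_singleton]
  have e1 : (1 : Equiv.Perm (Fin 3)) 0 = 0 := rfl
  -- norms of differences
  have n01 : ‖w 0 - w 1‖ = a := by rw [hadef, dist_eq_norm]
  have n10 : ‖w 1 - w 0‖ = a := by rw [hadef, dist_eq_norm']
  have n02 : ‖w 0 - w 2‖ = b := by rw [hbdef, dist_eq_norm]
  have n20 : ‖w 2 - w 0‖ = b := by rw [hbdef, dist_eq_norm']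
  have n12 : ‖w 1 - w 2‖ = c := by rw [hcdef, dist_eq_norm]
  have n21 : ‖w 2 - w 1‖ = c := by rw [hcdef, dist_eq_norm']
  have d1 : w 1 - w 0 - (w 2 - w 0) = w 1 - w 2 := by abel
  have d1' : w 2 - w 0 - (w 1 - w 0) = w 2 - w 1 := by abel
  have d2 : w 0 - w 1 - (w 2 - w 1) = w 0 - w 2 := by abel
  have d2' : w 2 - w 1 - (w 0 - w 1) = w 2 - w 0 := by abel
  have d3 : w 1 - w 2 - (w 0 - w 2) = w 1 - w 0 := by abel
  have d3' : w 0 - w 2 - (w 1 - w 2) = w 0 - w 1 := by abel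
  -- evaluate the permutations
  have s01_0 : (Equiv.swap (0:Fin 3) 1) 0 = 1 := by decide
  have s01_1 : (Equiv.swap (0:Fin 3) 1) 1 = 0 := by decide
  have s01_2 : (Equiv.swap (0:Fin 3) 1) 2 = 2 := by decide
  have s02_0 : (Equiv.swap (0:Fin 3) 2) 0 = 2 := by decide
  have s02_1 : (Equiv.swap (0:Fin 3) 2) 1 = 1 := by decide
  have s02_2 : (Equiv.swap (0:Fin 3) 2) 2 = 0 := by decide
  have s12_0 : (Equiv.swap (1:Fin 3) 2) 0 = 0 := by decide
  have s12_1 : (Equiv.swap (1:Fin 3) 2) 1 = 2 := by decide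
  have s12_2 : (Equiv.swap (1:Fin 3) 2) 2 = 1 := by decide
  simp only [inner_rieszK, Equiv.Perm.mul_apply, Equiv.Perm.one_apply,
    s01_0, s01_1, s01_2, s02_0, s02_1, s02_2, s12_0, s12_1, s12_2]
  rw [d1, d1', d2, d2', d3, d3', n01, n10, n02, n20, n12, n21]
  -- now a pure real identity
  have hA : (0:ℝ) < a^(1+s) := Real.rpow_pos_of_pos ha _
  have hB : (0:ℝ) < b^(1+s) := Real.rpow_pos_of_pos hb _
  have hC : (0:ℝ) < c^(1+s) := Real.rpow_pos_of_pos hc _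
  have ia : a ^ (-(1+s)) = (a^(1+s))⁻¹ := Real.rpow_neg ha.le _
  have ib : b ^ (-(1+s)) = (b^(1+s))⁻¹ := Real.rpow_neg hb.le _
  have ic : c ^ (-(1+s)) = (c^(1+s))⁻¹ := Real.rpow_neg hc.le _
  have hprod : (a*b*c)^(1+s) = a^(1+s) * b^(1+s) * c^(1+s) := by
    rw [Real.mul_rpow (by positivity) hc.le, Real.mul_rpow ha.le hb.le]
  rw [Pq, Fq, hprod, ia, ib, ic]
  field_simp
  ring


/-- For `0 < s < 1`, the symmetrized quantity `p_s(x₁,x₂,x₃)` is comparable to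
`max(|x₁-x₂|, |x₁-x₃|, |x₂-x₃|)^{-2s}`, with constants depending only on `s` and `d`. -/
theorem stmt0 (d : ℕ) (hd : 0 < d) (s : ℝ) (hs : 0 < s) (hs1 : s < 1) :
    ∃ c₁ c₂ : ℝ, 0 < c₁ ∧ 0 < c₂ ∧
      ∀ w : Fin 3 → EuclideanSpace ℝ (Fin d),
        (∀ i j : Fin 3, i ≠ j → w i ≠ w j) →
        c₁ * (max (dist (w 0) (w 1)) (max (dist (w 0) (w 2)) (dist (w 1) (w 2)))) ^ (-(2 * s))
            ≤ pperm d s w ∧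
        pperm d s w ≤
          c₂ * (max (dist (w 0) (w 1)) (max (dist (w 0) (w 2)) (dist (w 1) (w 2)))) ^ (-(2 * s)) := by
  have hk0 : 0 < min (1:ℝ) (2*(2 - (2:ℝ)^s)) / 4 := by
    have h2slt : (2:ℝ)^s < (2:ℝ)^(1:ℝ) := Real.rpow_lt_rpow_of_exponent_lt one_lt_two hs1
    rw [Real.rpow_one] at h2slt
    have : 0 < min (1:ℝ) (2*(2 - (2:ℝ)^s)) := lt_min one_pos (by linarith)
    linarith
  refine ⟨min (1:ℝ) (2*(2 - (2:ℝ)^s)) / 4, 8, hk0, by norm_num, ?_⟩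
  intro w hw
  have hx : 0 < dist (w 0) (w 1) := dist_pos.2 (hw 0 1 (by decide))
  have hy : 0 < dist (w 0) (w 2) := dist_pos.2 (hw 0 2 (by decide))
  have hz : 0 < dist (w 1) (w 2) := dist_pos.2 (hw 1 2 (by decide))
  have t1 : dist (w 0) (w 1) ≤ dist (w 0) (w 2) + dist (w 1) (w 2) := by
    have := dist_triangle (w 0) (w 2) (w 1)
    rw [dist_comm (w 2) (w 1)] at this
    linarith
  have t2 : dist (w 0) (w 2) ≤ dist (w 0) (w 1) + dist (w 1) (w 2) := dist_triangle _ _ _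
  have t3 : dist (w 1) (w 2) ≤ dist (w 0) (w 1) + dist (w 0) (w 2) := by
    have := dist_triangle (w 1) (w 0) (w 2)
    rw [dist_comm (w 1) (w 0)] at this
    linarith
  rw [pperm_eq_Pq d s w hw]
  exact Pq_bounds_max hs hs1 _ _ _ hx hy hz t1 t2 t3
end

section
/- Let 0 < s < 1 and let mu have s-growth with constant c. Fix x in R^d and epsilon > 0. Then the double integral over the set {(y,z) : |y-x| > epsilon, |z-x| <= epsilon, |z-y| > epsilon} of 1/(|x-y|^s |z-y|^s) dmu(y) dmu(z) is at most C(s,d,c) * mu(B(x, epsilon)) / epsilon^s. -/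
open MeasureTheory Metric
open scoped ENNReal



lemma tail_bound {d : ℕ} {s c : ℝ} (hs : 0 < s) (hc : 0 < c)
    (μ : Measure (EuclideanSpace ℝ (Fin d)))
    (hμ : ∀ (x : EuclideanSpace ℝ (Fin d)) (r : ℝ), 0 < r →
      μ (ball x r) ≤ ENNReal.ofReal (c * r ^ s))
    (x : EuclideanSpace ℝ (Fin d)) (ε : ℝ) (hε : 0 < ε) :
    ∫⁻ y in {y | ε < dist y x}, ENNReal.ofReal (dist x y ^ (-(2*s))) ∂μ
      ≤ ENNReal.ofReal (c * 2^s * ε^(-s)) * (1 - ENNReal.ofReal (2^(-s)))⁻¹ := by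
  set A : ℕ → Set (EuclideanSpace ℝ (Fin d)) :=
    fun n => {y | 2^n * ε ≤ dist y x ∧ dist y x < 2^(n+1) * ε} with hA
  have hpr : ∀ {y : ℝ} (hy : 0 ≤ y) (n : ℕ) (z : ℝ), (y ^ n) ^ z = (y ^ z) ^ n := by
    intro y hy n z
    rw [← Real.rpow_natCast y n, ← Real.rpow_mul hy, mul_comm, Real.rpow_mul hy, Real.rpow_natCast]
  have hsub : {y | ε < dist y x} ⊆ ⋃ n, A n := by
    intro y hy
    have h1 : 1 ≤ dist y x / ε := (one_le_div hε).2 (le_of_lt hy)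
    obtain ⟨n, hn1, hn2⟩ := exists_nat_pow_near h1 one_lt_two
    exact Set.mem_iUnion.2 ⟨n, (le_div_iff₀ hε).1 hn1, (div_lt_iff₀ hε).1 hn2⟩
  have key : ∀ n, ∫⁻ y in A n, ENNReal.ofReal (dist x y ^ (-(2*s))) ∂μ
      ≤ ENNReal.ofReal (c * 2^s * ε^(-s)) * ENNReal.ofReal (2^(-s)) ^ n := by
    intro n
    have hpos : (0:ℝ) < 2^n * ε := by positivity
    calc ∫⁻ y in A n, ENNReal.ofReal (dist x y ^ (-(2*s))) ∂μ
        ≤ ∫⁻ _ in A n, ENNReal.ofReal ((2^n * ε) ^ (-(2*s))) ∂μ := by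
          apply setLIntegral_mono measurable_const
          intro y hy
          apply ENNReal.ofReal_le_ofReal
          exact Real.rpow_le_rpow_of_nonpos hpos (by rw [dist_comm]; exact hy.1) (by nlinarith)
      _ = ENNReal.ofReal ((2^n * ε) ^ (-(2*s))) * μ (A n) := setLIntegral_const _ _
      _ ≤ ENNReal.ofReal ((2^n * ε) ^ (-(2*s))) * ENNReal.ofReal (c * (2^(n+1) * ε) ^ s) := by
          gcongr
          refine le_trans (measure_mono ?_) (hμ x (2^(n+1) * ε) (by positivity))
          exact fun y hy => mem_ball.2 hy.2
      _ = ENNReal.ofReal (c * 2^s * ε^(-s)) * ENNReal.ofReal (2^(-s)) ^ n := by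
          rw [← ENNReal.ofReal_pow (by positivity), ← ENNReal.ofReal_mul (by positivity),
            ← ENNReal.ofReal_mul (by positivity)]
          congr 1
          rw [Real.mul_rpow (by positivity) hε.le, Real.mul_rpow (by positivity) hε.le,
            hpr (by norm_num) n, hpr (by norm_num) (n+1), pow_succ]
          rw [show (2:ℝ)^(-s) = 2^(-(2*s)) * 2^s by rw [← Real.rpow_add two_pos]; ring_nf,
            show ε^(-s) = ε^(-(2*s)) * ε^s by rw [← Real.rpow_add hε]; ring_nf, mul_pow]
          ring
  calc ∫⁻ y in {y | ε < dist y x}, ENNReal.ofReal (dist x y ^ (-(2*s))) ∂μ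
      ≤ ∫⁻ y in ⋃ n, A n, ENNReal.ofReal (dist x y ^ (-(2*s))) ∂μ := lintegral_mono_set hsub
    _ ≤ ∑' n, ∫⁻ y in A n, ENNReal.ofReal (dist x y ^ (-(2*s))) ∂μ := lintegral_iUnion_le _ _
    _ ≤ ∑' n, ENNReal.ofReal (c * 2^s * ε^(-s)) * ENNReal.ofReal (2^(-s)) ^ n :=
        ENNReal.tsum_le_tsum key
    _ = ENNReal.ofReal (c * 2^s * ε^(-s)) * ∑' n, ENNReal.ofReal (2^(-s)) ^ n :=
        ENNReal.tsum_mul_left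
    _ = ENNReal.ofReal (c * 2^s * ε^(-s)) * (1 - ENNReal.ofReal (2^(-s)))⁻¹ := by
        rw [ENNReal.tsum_geometric]


/-- If `μ` has `s`-growth with constant `c`, then for every `x` and `ε > 0`, the double
integral over `{(y,z) : |y-x| > ε, |z-x| ≤ ε, |z-y| > ε}` of `1/(|x-y|^s |z-y|^s)`
is at most `C(s,d,c) μ(B(x,ε)) / ε^s`. -/
theorem stmt4 (d : ℕ) (s c : ℝ) (hs : 0 < s) (hs1 : s < 1) (hc : 0 < c) :
    ∃ C : ℝ, 0 < C ∧
      ∀ μ : Measure (EuclideanSpace ℝ (Fin d)), SFinite μ →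
        (∀ (x : EuclideanSpace ℝ (Fin d)) (r : ℝ), 0 < r →
          μ (ball x r) ≤ ENNReal.ofReal (c * r ^ s)) →
        ∀ (x : EuclideanSpace ℝ (Fin d)) (ε : ℝ), 0 < ε →
          ∫⁻ p in {p : EuclideanSpace ℝ (Fin d) × EuclideanSpace ℝ (Fin d) |
              ε < dist p.1 x ∧ dist p.2 x ≤ ε ∧ ε < dist p.2 p.1},
              ENNReal.ofReal (1 / (dist x p.1 ^ s * dist p.2 p.1 ^ s)) ∂(μ.prod μ)
            ≤ ENNReal.ofReal (C * ε ^ (-s)) * μ (closedBall x ε) := by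
  have h2s : (0:ℝ) < (2:ℝ)^s := Real.rpow_pos_of_pos two_pos s
  have hr1 : (2:ℝ)^(-s) < 1 := Real.rpow_lt_one_of_one_lt_of_neg one_lt_two (by linarith)
  have hr0 : (0:ℝ) < (2:ℝ)^(-s) := Real.rpow_pos_of_pos two_pos _
  have hinv : (0:ℝ) < (1 - 2^(-s))⁻¹ := inv_pos.2 (by linarith)
  refine ⟨2^s * (c * 2^s * (1 - 2^(-s))⁻¹), by positivity, ?_⟩
  intro μ hsf hμ x ε hε
  have hgm : Measurable fun y : EuclideanSpace ℝ (Fin d) =>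
      ENNReal.ofReal (2^s * dist x y ^ (-(2*s))) :=
    ((((continuous_const.dist continuous_id).measurable).pow
      measurable_const).const_mul _).ennreal_ofReal
  have hgm2 : Measurable fun p : EuclideanSpace ℝ (Fin d) × EuclideanSpace ℝ (Fin d) =>
      ENNReal.ofReal (2^s * dist x p.1 ^ (-(2*s))) :=
    hgm.comp measurable_fst
  have hpoint : ∀ p : EuclideanSpace ℝ (Fin d) × EuclideanSpace ℝ (Fin d),
      p ∈ {p : EuclideanSpace ℝ (Fin d) × EuclideanSpace ℝ (Fin d) |
        ε < dist p.1 x ∧ dist p.2 x ≤ ε ∧ ε < dist p.2 p.1} →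
      ENNReal.ofReal (1 / (dist x p.1 ^ s * dist p.2 p.1 ^ s))
      ≤ ENNReal.ofReal (2^s * dist x p.1 ^ (-(2*s))) := by
    rintro p ⟨h1, h2, h3⟩
    have ht : 0 < dist x p.1 := by rw [dist_comm]; linarith
    have hu : dist x p.1 / 2 ≤ dist p.2 p.1 := by
      have htr := dist_triangle p.1 p.2 x
      rw [dist_comm x p.1]
      rcases le_or_gt (2*ε) (dist p.1 x) with h | h
      · rw [dist_comm p.2 p.1]; linarith
      · linarith
    apply ENNReal.ofReal_le_ofReal
    have h4 : (0:ℝ) < dist x p.1 ^ s := Real.rpow_pos_of_pos ht s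
    have hb1 : (dist x p.1/2)^s ≤ dist p.2 p.1^s :=
      Real.rpow_le_rpow (by positivity) hu hs.le
    have h3' : 1 / (dist x p.1^s * dist p.2 p.1^s)
        ≤ 1 / (dist x p.1^s * (dist x p.1/2)^s) := by
      apply one_div_le_one_div_of_le (by positivity)
      exact mul_le_mul_of_nonneg_left hb1 h4.le
    refine h3'.trans_eq ?_
    rw [Real.div_rpow ht.le (by norm_num), Real.rpow_neg ht.le,
      show dist x p.1^(2*s) = dist x p.1^s * dist x p.1^s by
        rw [← Real.rpow_add ht]; ring_nf]
    field_simp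
  calc ∫⁻ p in {p : EuclideanSpace ℝ (Fin d) × EuclideanSpace ℝ (Fin d) |
          ε < dist p.1 x ∧ dist p.2 x ≤ ε ∧ ε < dist p.2 p.1},
          ENNReal.ofReal (1 / (dist x p.1 ^ s * dist p.2 p.1 ^ s)) ∂(μ.prod μ)
      ≤ ∫⁻ p in {p : EuclideanSpace ℝ (Fin d) × EuclideanSpace ℝ (Fin d) |
          ε < dist p.1 x ∧ dist p.2 x ≤ ε ∧ ε < dist p.2 p.1},
          ENNReal.ofReal (2^s * dist x p.1 ^ (-(2*s))) ∂(μ.prod μ) :=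
        setLIntegral_mono hgm2 hpoint
    _ ≤ ∫⁻ p in {y : EuclideanSpace ℝ (Fin d) | ε < dist y x} ×ˢ closedBall x ε,
          ENNReal.ofReal (2^s * dist x p.1 ^ (-(2*s))) ∂(μ.prod μ) := by
        apply lintegral_mono_set
        rintro p ⟨h1, h2, _⟩
        exact ⟨h1, mem_closedBall.2 h2⟩
    _ = (∫⁻ y in {y : EuclideanSpace ℝ (Fin d) | ε < dist y x},
          ENNReal.ofReal (2^s * dist x y ^ (-(2*s))) ∂μ) * μ (closedBall x ε) := by
        rw [← Measure.prod_restrict]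
        rw [lintegral_prod _ hgm2.aemeasurable]
        simp_rw [lintegral_const, Measure.restrict_apply_univ]
        exact lintegral_mul_const _ hgm
    _ ≤ ENNReal.ofReal (2^s) * (ENNReal.ofReal (c * 2^s * ε^(-s))
          * (1 - ENNReal.ofReal (2^(-s)))⁻¹) * μ (closedBall x ε) := by
        gcongr
        have heq : ∀ y : EuclideanSpace ℝ (Fin d),
            ENNReal.ofReal (2^s * dist x y ^ (-(2*s)))
            = ENNReal.ofReal (2^s) * ENNReal.ofReal (dist x y ^ (-(2*s))) :=
          fun y => ENNReal.ofReal_mul (by positivity)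
        simp_rw [heq]
        rw [lintegral_const_mul' _ _ ENNReal.ofReal_ne_top]
        exact mul_le_mul_right (tail_bound hs hc μ hμ x ε hε) _
    _ = ENNReal.ofReal (2^s * (c * 2^s * (1 - 2^(-s))⁻¹) * ε ^ (-s)) * μ (closedBall x ε) := by
        congr 1
        rw [show (1:ℝ≥0∞) - ENNReal.ofReal (2^(-s))
            = ENNReal.ofReal (1 - 2^(-s)) by
              rw [ENNReal.ofReal_sub _ hr0.le, ENNReal.ofReal_one],
          ← ENNReal.ofReal_inv_of_pos (by linarith),
          ← ENNReal.ofReal_mul (by positivity), ← ENNReal.ofReal_mul (by positivity)]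
        congr 1
        ring
end

section
/- Let 0 < s < 1 and let mu be a Radon measure with s-growth on R^d. Let E be a bounded measurable set and epsilon > 0. Then the iterated integral int int_{y in E, |y-x| > epsilon} mu(B(y, epsilon)) / |y - x|^{2s} dmu(y) dmu(x) <= C(s,c) * int_{y in E} mu(B(y, epsilon)) / epsilon^s dmu(y). Moreover, if additionally lim_{r -> 0} mu(B(y,r))/r^s = 0 for mu-a.e. y and mu(E) < infinity, the right-hand side tends to 0 as epsilon -> 0. -/
open MeasureTheory Metric Filter

theorem term_eq (s c ε : ℝ) (hε : 0 < ε) (k : ℕ) :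
    ((2:ℝ)^k * ε) ^ (-(2*s)) * (c * ((2:ℝ)^(k+2) * ε) ^ s)
      = (c * (2:ℝ)^(2*s) * ε^(-s)) * ((2:ℝ)^(-s))^k := by
  have h2 : (0:ℝ) < 2 := two_pos
  rw [Real.mul_rpow (by positivity) hε.le, Real.mul_rpow (by positivity) hε.le,
      ← Real.rpow_natCast 2 k, ← Real.rpow_natCast 2 (k+2),
      ← Real.rpow_natCast ((2:ℝ)^(-s)) k,
      ← Real.rpow_mul h2.le, ← Real.rpow_mul h2.le, ← Real.rpow_mul h2.le]
  push_cast
  rw [show (↑k:ℝ) * (-(2*s)) = (-(2*s))*(k:ℝ) from by ring]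
  rw [show ((↑k:ℝ)+2) * s = 2*s + s*(k:ℝ) from by ring]
  rw [Real.rpow_add h2]
  have e1 : (2:ℝ)^(-(2*s)*(k:ℝ)) * 2^(s*(k:ℝ)) = 2^(-s*(k:ℝ)) := by
    rw [← Real.rpow_add h2]; ring_nf
  have e2 : ε^(-(2*s)) * ε^s = ε^(-s) := by
    rw [← Real.rpow_add hε]; ring_nf
  calc (2:ℝ)^(-(2*s)*(k:ℝ)) * ε ^ (-(2*s)) * (c * (2^(2*s) * 2^(s*(k:ℝ)) * ε^s))
      = ((2:ℝ)^(-(2*s)*(k:ℝ)) * 2^(s*(k:ℝ))) * (ε^(-(2*s)) * ε^s) * (c * 2^(2*s)) := by ring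
    _ = 2^(-s*(k:ℝ)) * ε^(-s) * (c * 2^(2*s)) := by rw [e1, e2]
    _ = c * 2^(2*s) * ε^(-s) * 2^(-s*(k:ℝ)) := by ring

theorem key_aux {d : ℕ} (s c : ℝ) (hs : 0 < s) (hc : 0 < c)
    (μ : Measure (EuclideanSpace ℝ (Fin d)))
    (hμ : ∀ x r, 0 < r → μ (ball x r) ≤ ENNReal.ofReal (c * r ^ s))
    (y : EuclideanSpace ℝ (Fin d)) (ε : ℝ) (hε : 0 < ε) :
    ∫⁻ x in {x | ε < dist y x}, ENNReal.ofReal (dist y x ^ (-(2*s))) ∂μ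
      ≤ ENNReal.ofReal (c * 2^(2*s) * (1 - 2^(-s))⁻¹) * ENNReal.ofReal (ε ^ (-s)) := by
  set A : ℕ → Set (EuclideanSpace ℝ (Fin d)) :=
    fun k => {x | 2^k * ε < dist y x ∧ dist y x ≤ 2^(k+1) * ε} with hA
  have hd : Continuous fun x : EuclideanSpace ℝ (Fin d) => dist y x :=
    continuous_const.dist continuous_id
  have hAm : ∀ k, MeasurableSet (A k) := fun k =>
    ((isOpen_lt continuous_const hd).measurableSet).inter
      (isClosed_le hd continuous_const).measurableSet
  have cover : {x | ε < dist y x} ⊆ ⋃ k, A k := by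
    intro x hx
    have hx' : ε < dist y x := hx
    have hPex : ∃ n : ℕ, dist y x ≤ 2^(n+1) * ε := by
      obtain ⟨n, hn⟩ := pow_unbounded_of_one_lt (dist y x / ε) (one_lt_two (α := ℝ))
      refine ⟨n, ?_⟩
      rw [div_lt_iff₀ hε] at hn
      have h2n : (0:ℝ) < 2^n := pow_pos two_pos n
      have hps : (2:ℝ)^(n+1) = 2 * 2^n := by rw [pow_succ]; ring
      nlinarith
    refine Set.mem_iUnion.mpr ⟨Nat.find hPex, ⟨?_, Nat.find_spec hPex⟩⟩
    rcases Nat.eq_zero_or_pos (Nat.find hPex) with h0 | hpos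
    · rw [h0]; simpa using hx'
    · have hmin := Nat.find_min hPex (Nat.sub_lt hpos one_pos)
      have h1 : Nat.find hPex - 1 + 1 = Nat.find hPex := by omega
      rw [h1] at hmin
      exact not_le.mp hmin
  have hball : ∀ k, A k ⊆ ball y (2^(k+2) * ε) := by
    intro k x hx
    have h1 : dist y x ≤ 2^(k+1) * ε := hx.2
    have h2 : (2:ℝ)^(k+1) * ε < 2^(k+2) * ε :=
      mul_lt_mul_of_pos_right (pow_lt_pow_right₀ one_lt_two (Nat.lt_succ_self _)) hε
    rw [mem_ball, dist_comm]
    linarith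
  have hterm : ∀ k, ∫⁻ x in A k, ENNReal.ofReal (dist y x ^ (-(2*s))) ∂μ
      ≤ ENNReal.ofReal (c * 2^(2*s) * ε^(-s)) * (ENNReal.ofReal ((2:ℝ)^(-s)))^k := by
    intro k
    have h2k : (0:ℝ) < 2^k * ε := by positivity
    have hb1 : ∫⁻ x in A k, ENNReal.ofReal (dist y x ^ (-(2*s))) ∂μ
        ≤ ∫⁻ _ in A k, ENNReal.ofReal ((2^k * ε) ^ (-(2*s))) ∂μ := by
      refine setLIntegral_mono' (hAm k) fun x hx => ?_
      exact ENNReal.ofReal_le_ofReal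
        (Real.rpow_le_rpow_of_nonpos h2k hx.1.le (by linarith))
    have hb2 : μ (A k) ≤ ENNReal.ofReal (c * (2^(k+2) * ε) ^ s) :=
      le_trans (measure_mono (hball k)) (hμ y _ (by positivity))
    calc ∫⁻ x in A k, ENNReal.ofReal (dist y x ^ (-(2*s))) ∂μ
        ≤ ENNReal.ofReal ((2^k * ε) ^ (-(2*s))) * μ (A k) := by
          simpa [setLIntegral_const] using hb1
      _ ≤ ENNReal.ofReal ((2^k * ε) ^ (-(2*s))) * ENNReal.ofReal (c * (2^(k+2) * ε) ^ s) :=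
          mul_le_mul_right hb2 _
      _ = ENNReal.ofReal (((2^k * ε) ^ (-(2*s))) * (c * (2^(k+2) * ε) ^ s)) := by
          rw [← ENNReal.ofReal_mul (by positivity)]
      _ = ENNReal.ofReal ((c * 2^(2*s) * ε^(-s)) * ((2:ℝ)^(-s))^k) := by
          rw [term_eq s c ε hε k]
      _ = ENNReal.ofReal (c * 2^(2*s) * ε^(-s)) * (ENNReal.ofReal ((2:ℝ)^(-s)))^k := by
          rw [ENNReal.ofReal_mul (by positivity), ENNReal.ofReal_pow (by positivity)]
  have h2s1 : (2:ℝ)^(-s) < 1 := Real.rpow_lt_one_of_one_lt_of_neg one_lt_two (by linarith)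
  have h2s0 : (0:ℝ) < (2:ℝ)^(-s) := Real.rpow_pos_of_pos two_pos _
  calc ∫⁻ x in {x | ε < dist y x}, ENNReal.ofReal (dist y x ^ (-(2*s))) ∂μ
      ≤ ∫⁻ x in ⋃ k, A k, ENNReal.ofReal (dist y x ^ (-(2*s))) ∂μ :=
        lintegral_mono_set cover
    _ ≤ ∑' k, ∫⁻ x in A k, ENNReal.ofReal (dist y x ^ (-(2*s))) ∂μ :=
        lintegral_iUnion_le _ _
    _ ≤ ∑' k, ENNReal.ofReal (c * 2^(2*s) * ε^(-s)) * (ENNReal.ofReal ((2:ℝ)^(-s)))^k :=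
        ENNReal.tsum_le_tsum hterm
    _ = ENNReal.ofReal (c * 2^(2*s) * ε^(-s)) * (1 - ENNReal.ofReal ((2:ℝ)^(-s)))⁻¹ := by
        rw [ENNReal.tsum_mul_left, ENNReal.tsum_geometric]
    _ = ENNReal.ofReal (c * 2^(2*s) * (1 - 2^(-s))⁻¹) * ENNReal.ofReal (ε ^ (-s)) := by
        have hsub : (1 : ENNReal) - ENNReal.ofReal ((2:ℝ)^(-s))
            = ENNReal.ofReal (1 - 2^(-s)) := by
          rw [ENNReal.ofReal_sub _ h2s0.le, ENNReal.ofReal_one]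
        have hpos1 : (0:ℝ) < 1 - 2^(-s) := by linarith
        rw [hsub, ← ENNReal.ofReal_inv_of_pos hpos1,
          ← ENNReal.ofReal_mul (by positivity),
          ← ENNReal.ofReal_mul (mul_nonneg (by positivity) (inv_nonneg.mpr hpos1.le))]
        ring_nf

/-- Let `μ` have `s`-growth. For a bounded set `E` and `ε > 0`,
`∫∫_{y ∈ E, |y-x|>ε} μ(B(y,ε))/|y-x|^{2s} dμ(y) dμ(x) ≤ C(s,c) ∫_{y∈E} μ(B(y,ε))/ε^s dμ(y)`.
Moreover, if `μ(B(y,r))/r^s → 0` as `r → 0` for `μ`-a.e. `y` and `μ(E) < ∞`, then the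
right-hand side integral tends to `0` as `ε → 0`. -/
theorem stmt5 (d : ℕ) (s c : ℝ) (hs : 0 < s) (hs1 : s < 1) (hc : 0 < c) :
    ∃ C : ℝ, 0 < C ∧
      ∀ μ : Measure (EuclideanSpace ℝ (Fin d)),
        (∀ (x : EuclideanSpace ℝ (Fin d)) (r : ℝ), 0 < r →
          μ (ball x r) ≤ ENNReal.ofReal (c * r ^ s)) →
        ∀ E : Set (EuclideanSpace ℝ (Fin d)), MeasurableSet E → Bornology.IsBounded E →
          (∀ ε : ℝ, 0 < ε →
            ∫⁻ x, ∫⁻ y in E ∩ {y | ε < dist y x},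
                μ (ball y ε) * ENNReal.ofReal (dist y x ^ (-(2 * s))) ∂μ ∂μ
              ≤ ENNReal.ofReal C *
                  ∫⁻ y in E, μ (ball y ε) * ENNReal.ofReal (ε ^ (-s)) ∂μ) ∧
          ((∀ᵐ y ∂μ, Tendsto (fun r : ℝ => μ (ball y r) / ENNReal.ofReal (r ^ s))
                (nhdsWithin 0 (Set.Ioi 0)) (nhds 0)) →
            μ E < ⊤ →
            Tendsto (fun ε : ℝ => ∫⁻ y in E, μ (ball y ε) * ENNReal.ofReal (ε ^ (-s)) ∂μ)
              (nhdsWithin 0 (Set.Ioi 0)) (nhds 0)) := by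
  classical
  have h2s1 : (2:ℝ)^(-s) < 1 := Real.rpow_lt_one_of_one_lt_of_neg one_lt_two (by linarith)
  have h2s0 : (0:ℝ) < (2:ℝ)^(-s) := Real.rpow_pos_of_pos two_pos _
  have h22s : (0:ℝ) < (2:ℝ)^(2*s) := Real.rpow_pos_of_pos two_pos _
  have hsub0 : (0:ℝ) < 1 - 2^(-s) := by linarith
  refine ⟨c * 2^(2*s) * (1 - 2^(-s))⁻¹, by positivity, ?_⟩
  intro μ hμ E hE hEb
  haveI : IsLocallyFiniteMeasure μ := ⟨fun x => ⟨ball x 1, ball_mem_nhds x one_pos,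
    lt_of_le_of_lt (hμ x 1 one_pos) ENNReal.ofReal_lt_top⟩⟩
  have hg : ∀ r : ℝ, Measurable fun y : EuclideanSpace ℝ (Fin d) => μ (ball y r) := by
    intro r
    have hset : MeasurableSet {p : (EuclideanSpace ℝ (Fin d)) × (EuclideanSpace ℝ (Fin d)) |
        dist p.2 p.1 < r} :=
      (isOpen_lt (continuous_snd.dist continuous_fst) continuous_const).measurableSet
    have hball : ∀ y : EuclideanSpace ℝ (Fin d),
        ball y r = Prod.mk y ⁻¹' {p : (EuclideanSpace ℝ (Fin d)) × (EuclideanSpace ℝ (Fin d)) |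
          dist p.2 p.1 < r} := by
      intro y; ext x; simp [mem_ball]
    simp_rw [hball]
    exact measurable_measure_prodMk_left hset
  constructor
  · -- main estimate
    intro ε hε
    set G : EuclideanSpace ℝ (Fin d) → EuclideanSpace ℝ (Fin d) → ENNReal :=
      fun x y' => μ (ball y' ε) * ENNReal.ofReal (dist y' x ^ (-(2 * s))) with hG
    set F : EuclideanSpace ℝ (Fin d) → EuclideanSpace ℝ (Fin d) → ENNReal :=
      fun x y' => (E ∩ {y | ε < dist y x}).indicator (G x) y' with hF
    have hsetm : ∀ x : EuclideanSpace ℝ (Fin d), MeasurableSet {y : EuclideanSpace ℝ (Fin d) |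
        ε < dist y x} := fun x =>
      (isOpen_lt continuous_const (continuous_id.dist continuous_const)).measurableSet
    have hGm : ∀ y', Measurable fun x => G x y' := by
      intro y'
      exact measurable_const.mul ((((continuous_const.dist continuous_id).measurable).pow
        measurable_const).ennreal_ofReal)
    have hFm : Measurable (Function.uncurry F) := by
      have hTm : MeasurableSet {p : (EuclideanSpace ℝ (Fin d)) × (EuclideanSpace ℝ (Fin d)) |
          p.2 ∈ E ∩ {y | ε < dist y p.1}} := by
        have heq : {p : (EuclideanSpace ℝ (Fin d)) × (EuclideanSpace ℝ (Fin d)) |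
            p.2 ∈ E ∩ {y | ε < dist y p.1}}
            = (Set.univ ×ˢ E) ∩ {p : (EuclideanSpace ℝ (Fin d)) × (EuclideanSpace ℝ (Fin d)) |
              ε < dist p.2 p.1} := by
          ext p
          simp only [Set.mem_setOf_eq, Set.mem_inter_iff, Set.mem_prod, Set.mem_univ, true_and]
        rw [heq]
        exact (MeasurableSet.univ.prod hE).inter
          (isOpen_lt continuous_const (continuous_snd.dist continuous_fst)).measurableSet
      have huncurry : Function.uncurry F
          = Set.indicator {p : (EuclideanSpace ℝ (Fin d)) × (EuclideanSpace ℝ (Fin d)) |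
              p.2 ∈ E ∩ {y | ε < dist y p.1}} (fun p => G p.1 p.2) := by
        funext p
        rcases p with ⟨x, y'⟩
        by_cases hp : y' ∈ E ∩ {y | ε < dist y x}
        · rw [Function.uncurry]
          simp only [hF]
          rw [Set.indicator_of_mem hp]
          exact (Set.indicator_of_mem (show (x, y') ∈
            {p : (EuclideanSpace ℝ (Fin d)) × (EuclideanSpace ℝ (Fin d)) |
              p.2 ∈ E ∩ {y | ε < dist y p.1}} from hp) (fun p => G p.1 p.2)).symm
        · rw [Function.uncurry]
          simp only [hF]
          rw [Set.indicator_of_notMem hp]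
          exact (Set.indicator_of_notMem (show (x, y') ∉
            {p : (EuclideanSpace ℝ (Fin d)) × (EuclideanSpace ℝ (Fin d)) |
              p.2 ∈ E ∩ {y | ε < dist y p.1}} from hp) (fun p => G p.1 p.2)).symm
      rw [huncurry]
      refine Measurable.indicator ?_ hTm
      exact ((hg ε).comp measurable_snd).mul
        (((measurable_snd.dist measurable_fst).pow measurable_const).ennreal_ofReal)
    have hinner : ∀ x, ∫⁻ y' in E ∩ {y | ε < dist y x}, G x y' ∂μ = ∫⁻ y', F x y' ∂μ := by
      intro x
      rw [lintegral_indicator (hE.inter (hsetm x))]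
    have hswap : ∫⁻ x, ∫⁻ y', F x y' ∂μ ∂μ = ∫⁻ y', ∫⁻ x, F x y' ∂μ ∂μ :=
      lintegral_lintegral_swap hFm.aemeasurable
    have hx_int : ∀ y', ∫⁻ x, F x y' ∂μ ≤ E.indicator (fun y'' =>
        ENNReal.ofReal (c * 2^(2*s) * (1 - 2^(-s))⁻¹)
          * (μ (ball y'' ε) * ENNReal.ofReal (ε ^ (-s)))) y' := by
      intro y'
      by_cases hy : y' ∈ E
      · rw [Set.indicator_of_mem hy]
        have hFeq : ∀ x, F x y' = {x : EuclideanSpace ℝ (Fin d) | ε < dist y' x}.indicator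
            (fun x => μ (ball y' ε) * ENNReal.ofReal (dist y' x ^ (-(2 * s)))) x := by
          intro x
          by_cases hdx : ε < dist y' x
          · simp only [hF]
            rw [Set.indicator_of_mem (Set.mem_inter hy hdx),
              Set.indicator_of_mem (show x ∈ {x | ε < dist y' x} from hdx)]
          · simp only [hF]
            rw [Set.indicator_of_notMem (show y' ∉ E ∩ {y | ε < dist y x} from
                fun h => hdx h.2),
              Set.indicator_of_notMem (show x ∉ {x | ε < dist y' x} from hdx)]
        have hms : MeasurableSet {x : EuclideanSpace ℝ (Fin d) | ε < dist y' x} :=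
          measurableSet_lt measurable_const
            (continuous_const.dist continuous_id).measurable
        have hfm' : Measurable fun x : EuclideanSpace ℝ (Fin d) =>
            ENNReal.ofReal (dist y' x ^ (-(2 * s))) :=
          (((continuous_const.dist continuous_id).measurable).pow
            measurable_const).ennreal_ofReal
        rw [lintegral_congr hFeq, lintegral_indicator hms, lintegral_const_mul _ hfm']
        calc μ (ball y' ε) * ∫⁻ x in {x | ε < dist y' x},
              ENNReal.ofReal (dist y' x ^ (-(2 * s))) ∂μ
            ≤ μ (ball y' ε) * (ENNReal.ofReal (c * 2^(2*s) * (1 - 2^(-s))⁻¹)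
                * ENNReal.ofReal (ε ^ (-s))) := by
              refine mul_le_mul_right ?_ _
              exact key_aux s c hs hc μ hμ y' ε hε
          _ = ENNReal.ofReal (c * 2^(2*s) * (1 - 2^(-s))⁻¹)
                * (μ (ball y' ε) * ENNReal.ofReal (ε ^ (-s))) := by ring
      · rw [Set.indicator_of_notMem hy]
        have : ∀ x, F x y' = 0 := by
          intro x
          simp only [hF]
          rw [Set.indicator_of_notMem (show y' ∉ E ∩ {y | ε < dist y x} from
            fun h => hy h.1)]
        simp [this]
    calc ∫⁻ x, ∫⁻ y in E ∩ {y | ε < dist y x},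
          μ (ball y ε) * ENNReal.ofReal (dist y x ^ (-(2 * s))) ∂μ ∂μ
        = ∫⁻ x, ∫⁻ y', F x y' ∂μ ∂μ := by
          refine lintegral_congr fun x => ?_
          exact hinner x
      _ = ∫⁻ y', ∫⁻ x, F x y' ∂μ ∂μ := hswap
      _ ≤ ∫⁻ y', E.indicator (fun y'' =>
            ENNReal.ofReal (c * 2^(2*s) * (1 - 2^(-s))⁻¹)
              * (μ (ball y'' ε) * ENNReal.ofReal (ε ^ (-s)))) y' ∂μ :=
          lintegral_mono hx_int
      _ = ∫⁻ y' in E, ENNReal.ofReal (c * 2^(2*s) * (1 - 2^(-s))⁻¹)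
              * (μ (ball y' ε) * ENNReal.ofReal (ε ^ (-s))) ∂μ := by
          rw [lintegral_indicator hE]
      _ = ENNReal.ofReal (c * 2^(2*s) * (1 - 2^(-s))⁻¹) *
            ∫⁻ y in E, μ (ball y ε) * ENNReal.ofReal (ε ^ (-s)) ∂μ :=
          lintegral_const_mul' _ _ ENNReal.ofReal_ne_top
  · -- limit statement
    intro hlim hEfin
    have hDCT := tendsto_lintegral_filter_of_dominated_convergence
      (μ := μ.restrict E) (l := nhdsWithin (0:ℝ) (Set.Ioi 0))
      (F := fun ε y => μ (ball y ε) * ENNReal.ofReal (ε ^ (-s)))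
      (f := fun _ => 0) (fun _ => ENNReal.ofReal c)
      (Filter.Eventually.of_forall fun ε => (hg ε).mul_const _)
      ?_ ?_ ?_
    · simpa using hDCT
    · filter_upwards [self_mem_nhdsWithin] with ε hε
      refine Filter.Eventually.of_forall fun y => ?_
      have hε' : (0:ℝ) < ε := hε
      calc μ (ball y ε) * ENNReal.ofReal (ε ^ (-s))
          ≤ ENNReal.ofReal (c * ε ^ s) * ENNReal.ofReal (ε ^ (-s)) :=
            mul_le_mul_left (hμ y ε hε') _
        _ = ENNReal.ofReal (c * ε ^ s * ε ^ (-s)) := by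
            rw [← ENNReal.ofReal_mul (by positivity)]
        _ = ENNReal.ofReal c := by
            rw [mul_assoc, ← Real.rpow_add hε']
            simp
    · simp only [lintegral_const, Measure.restrict_apply MeasurableSet.univ,
        Set.univ_inter]
      exact ENNReal.mul_ne_top ENNReal.ofReal_ne_top hEfin.ne
    · refine ae_restrict_of_ae (hlim.mono fun y hy => ?_)
      refine Filter.Tendsto.congr' ?_ hy
      filter_upwards [self_mem_nhdsWithin] with r hr
      have hr' : (0:ℝ) < r := hr
      rw [Real.rpow_neg hr'.le, ENNReal.ofReal_inv_of_pos (Real.rpow_pos_of_pos hr' s),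
        ENNReal.div_eq_inv_mul, mul_comm]
end

section
/- Let 0 < s < 1 and let mu be a Radon measure on R^d. Let x in R^d and let (B_j)_{j=0}^{N} be an increasing sequence of concentric balls containing x, with r(B_j) = 2^{jm} r(B_0) for a fixed positive integer m. Suppose theta(B_j) >= theta0 > 0 for all j and mu(B_j \ B_{j-1}) >= mu(B_j)/2 for all 1 <= j <= N. Then the double integral over B_N x B_N of max(|x-y|, |x-z|, |y-z|)^{-2s} dmu(y) dmu(z) is at least c(s,d,m) * N * theta0^2. -/
open MeasureTheory Metric ENNReal

/-- The average `s`-dimensional density `θ(B(x,r)) = μ(B(x,r))/r^s`. -/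
noncomputable def thetaB {d : ℕ} (μ : Measure (EuclideanSpace ℝ (Fin d))) (s : ℝ)
    (x : EuclideanSpace ℝ (Fin d)) (r : ℝ) : ℝ :=
  (μ (ball x r)).toReal / r ^ s

/-- Given concentric balls `B_j` of radii `2^{jm} r₀` containing `x`, with densities
`θ(B_j) ≥ θ₀` and `μ(B_j \ B_{j-1}) ≥ μ(B_j)/2`, the double integral of
`max(|x-y|,|x-z|,|y-z|)^{-2s}` over `B_N × B_N` is at least `c(s,d,m) N θ₀²`. -/
theorem stmt11 (d m : ℕ) (s : ℝ) (hs : 0 < s) (hs1 : s < 1) (hm : 0 < m) :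
    ∃ c : ℝ, 0 < c ∧
      ∀ μ : Measure (EuclideanSpace ℝ (Fin d)), SFinite μ →
        ∀ (x₀ x : EuclideanSpace ℝ (Fin d)) (r₀ : ℝ), 0 < r₀ → x ∈ ball x₀ r₀ →
          ∀ (N : ℕ) (θ₀ : ℝ), 0 < θ₀ →
            (∀ j : ℕ, j ≤ N → θ₀ ≤ thetaB μ s x₀ ((2 : ℝ) ^ (j * m) * r₀)) →
            (∀ j : ℕ, 1 ≤ j → j ≤ N →
              μ (ball x₀ ((2 : ℝ) ^ (j * m) * r₀)) / 2
                ≤ μ (ball x₀ ((2 : ℝ) ^ (j * m) * r₀) \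
                    ball x₀ ((2 : ℝ) ^ ((j - 1) * m) * r₀))) →
            ENNReal.ofReal (c * N * θ₀ ^ 2)
              ≤ ∫⁻ p in (ball x₀ ((2 : ℝ) ^ (N * m) * r₀)) ×ˢ
                    (ball x₀ ((2 : ℝ) ^ (N * m) * r₀)),
                  ENNReal.ofReal
                    ((max (dist x p.1) (max (dist x p.2) (dist p.1 p.2))) ^ (-(2 * s)))
                  ∂(μ.prod μ) := by
  have hcpos : (0:ℝ) < (2:ℝ) ^ (-(2*s)) / 2 := by positivity
  refine ⟨(2:ℝ) ^ (-(2*s)) / 2, hcpos, ?_⟩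
  intro μ hsf x₀ x r₀ hr₀ hx N θ₀ hθ₀ hdens hann
  set c : ℝ := (2:ℝ) ^ (-(2*s)) / 2 with hc
  set R : ℕ → ℝ := fun j => (2:ℝ) ^ (j*m) * r₀ with hRdef
  have hRpos : ∀ j, 0 < R j := fun j => by positivity
  have hr0le : ∀ j, r₀ ≤ R j := by
    intro j
    have h1 : (1:ℝ) ≤ 2 ^ (j*m) := one_le_pow₀ one_le_two
    exact le_mul_of_one_le_left hr₀.le h1
  have hRmono : ∀ i j, i ≤ j → R i ≤ R j := by
    intro i j hij
    have : (2:ℝ) ^ (i*m) ≤ 2 ^ (j*m) :=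
      pow_le_pow_right₀ one_le_two (Nat.mul_le_mul_right m hij)
    exact mul_le_mul_of_nonneg_right this hr₀.le
  set B : ℕ → Set (EuclideanSpace ℝ (Fin d)) := fun j => ball x₀ (R j) with hBdef
  have hxB : ∀ j, x ∈ B j := fun j =>
    mem_ball.2 (lt_of_lt_of_le (mem_ball.1 hx) (hr0le j))
  -- measure lower bound
  have hμ : ∀ j ≤ N, ENNReal.ofReal (θ₀ * R j ^ s) ≤ μ (B j) := by
    intro j hj
    have hth := hdens j hj
    unfold thetaB at hth
    by_cases hfin : μ (ball x₀ ((2:ℝ) ^ (j*m) * r₀)) = ⊤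
    · rw [hfin] at hth
      simp only [ENNReal.toReal_top, zero_div] at hth
      linarith
    · refine ENNReal.ofReal_le_of_le_toReal ?_
      have hrs : (0:ℝ) < R j ^ s := Real.rpow_pos_of_pos (hRpos j) s
      rw [le_div_iff₀ hrs] at hth
      exact hth
  set f : EuclideanSpace ℝ (Fin d) × EuclideanSpace ℝ (Fin d) → ℝ≥0∞ := fun p =>
    ENNReal.ofReal ((max (dist x p.1) (max (dist x p.2) (dist p.1 p.2))) ^ (-(2*s))) with hfdef
  set S : ℕ → Set (EuclideanSpace ℝ (Fin d) × EuclideanSpace ℝ (Fin d)) := fun j =>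
    (B j) ×ˢ (B j \ B (j-1)) with hSdef
  have hSmeas : ∀ j, MeasurableSet (S j) := fun j =>
    measurableSet_ball.prod (measurableSet_ball.diff measurableSet_ball)
  have hdisj' : ∀ i j : ℕ, i < j → Disjoint (S i) (S j) := by
    intro i j hij
    rw [Set.disjoint_left]
    rintro p ⟨_, hpi2⟩ ⟨_, hpj2⟩
    exact hpj2.2 (mem_ball.2 (lt_of_lt_of_le (mem_ball.1 hpi2.1) (hRmono i (j-1) (by omega))))
  have hdisj : (↑(Finset.Icc 1 N) : Set ℕ).PairwiseDisjoint S := by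
    intro i _ j _ hij
    rcases lt_or_gt_of_ne hij with h | h
    · exact hdisj' i j h
    · exact (hdisj' j i h).symm
  -- lower bound on each piece
  have key : ∀ j ∈ Finset.Icc 1 N,
      ENNReal.ofReal (c * θ₀ ^ 2) ≤ ∫⁻ p in S j, f p ∂(μ.prod μ) := by
    intro j hj
    obtain ⟨hj1, hjN⟩ := Finset.mem_Icc.1 hj
    have hbound : ∀ p ∈ S j, ENNReal.ofReal ((2 * R j) ^ (-(2*s))) ≤ f p := by
      rintro p ⟨hp1, hp2, hp2'⟩
      set M := max (dist x p.1) (max (dist x p.2) (dist p.1 p.2)) with hM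
      have hd1 : dist x p.1 ≤ 2 * R j := by
        have := dist_triangle x x₀ p.1
        have h1 : dist x x₀ < R j := mem_ball.1 (hxB j)
        have h2 : dist x₀ p.1 < R j := mem_ball'.1 hp1
        linarith
      have hd2 : dist x p.2 ≤ 2 * R j := by
        have := dist_triangle x x₀ p.2
        have h1 : dist x x₀ < R j := mem_ball.1 (hxB j)
        have h2 : dist x₀ p.2 < R j := mem_ball'.1 hp2
        linarith
      have hd3 : dist p.1 p.2 ≤ 2 * R j := by
        have := dist_triangle p.1 x₀ p.2
        have h1 : dist p.1 x₀ < R j := mem_ball.1 hp1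
        have h2 : dist x₀ p.2 < R j := mem_ball'.1 hp2
        linarith
      have hMle : M ≤ 2 * R j := by
        simp only [hM, max_le_iff]; exact ⟨hd1, hd2, hd3⟩
      have hMpos : 0 < M := by
        have hne : x ≠ p.2 := by
          intro h
          apply hp2'
          rw [← h]
          exact mem_ball.2 (lt_of_lt_of_le (mem_ball.1 hx) (hr0le (j-1)))
        have : 0 < dist x p.2 := dist_pos.2 hne
        calc (0:ℝ) < dist x p.2 := this
          _ ≤ M := le_trans (le_max_left _ _) (le_max_right _ _)
      exact ENNReal.ofReal_le_ofReal
        (Real.rpow_le_rpow_of_nonpos hMpos hMle (by linarith))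
    have hμj : ENNReal.ofReal (θ₀ * R j ^ s) ≤ μ (B j) := hμ j hjN
    have hannj : μ (B j) / 2 ≤ μ (B j \ B (j-1)) := hann j hj1 hjN
    have harith : (2 * R j) ^ (-(2*s)) * ((θ₀ * R j ^ s) * (θ₀ * R j ^ s / 2)) = c * θ₀ ^ 2 := by
      rw [Real.mul_rpow (by norm_num) (hRpos j).le]
      have h1 : R j ^ (-(2*s)) * (R j ^ s * R j ^ s) = 1 := by
        rw [← Real.rpow_add (hRpos j), ← Real.rpow_add (hRpos j),
          show -(2*s) + (s + s) = 0 by ring, Real.rpow_zero]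
      rw [hc]
      linear_combination ((2:ℝ) ^ (-(2*s)) * θ₀ ^ 2 / 2) * h1
    calc ENNReal.ofReal (c * θ₀ ^ 2)
        = ENNReal.ofReal ((2 * R j) ^ (-(2*s))) *
            (ENNReal.ofReal (θ₀ * R j ^ s) * (ENNReal.ofReal (θ₀ * R j ^ s) / 2)) := by
          have ht : (0:ℝ) ≤ θ₀ * R j ^ s := by positivity
          rw [← harith]
          rw [show (ENNReal.ofReal (θ₀ * R j ^ s) / 2) = ENNReal.ofReal (θ₀ * R j ^ s / 2) by
            rw [ENNReal.ofReal_div_of_pos (by norm_num)]; norm_num]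
          rw [← ENNReal.ofReal_mul ht, ← ENNReal.ofReal_mul (by positivity)]
      _ ≤ ENNReal.ofReal ((2 * R j) ^ (-(2*s))) * (μ (B j) * μ (B j \ B (j-1))) := by
          gcongr
          exact le_trans (ENNReal.div_le_div_right hμj 2) hannj
      _ = ENNReal.ofReal ((2 * R j) ^ (-(2*s))) * (μ.prod μ) (S j) := by
          rw [hSdef]
          simp only [Measure.prod_prod]
      _ = ∫⁻ _ in S j, ENNReal.ofReal ((2 * R j) ^ (-(2*s))) ∂(μ.prod μ) := by
          rw [setLIntegral_const]
      _ ≤ ∫⁻ p in S j, f p ∂(μ.prod μ) := setLIntegral_mono' (hSmeas j) hbound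
  -- sum up
  have hsum : ∑ j ∈ Finset.Icc 1 N, ∫⁻ p in S j, f p ∂(μ.prod μ)
      ≤ ∫⁻ p in (B N) ×ˢ (B N), f p ∂(μ.prod μ) := by
    rw [← lintegral_biUnion_finset hdisj (fun j _ => hSmeas j)]
    apply lintegral_mono_set
    intro p hp
    simp only [Set.mem_iUnion] at hp
    obtain ⟨j, hj, hp1, hp2⟩ := hp
    obtain ⟨_, hjN⟩ := Finset.mem_Icc.1 hj
    exact ⟨mem_ball.2 (lt_of_lt_of_le (mem_ball.1 hp1) (hRmono j N hjN)),
      mem_ball.2 (lt_of_lt_of_le (mem_ball.1 hp2.1) (hRmono j N hjN))⟩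
  calc ENNReal.ofReal (c * N * θ₀ ^ 2)
      = ∑ _j ∈ Finset.Icc 1 N, ENNReal.ofReal (c * θ₀ ^ 2) := by
        rw [Finset.sum_const, Nat.card_Icc, Nat.add_sub_cancel,
          show c * N * θ₀ ^ 2 = (N:ℝ) * (c * θ₀ ^ 2) by ring,
          ENNReal.ofReal_mul (by positivity), ENNReal.ofReal_natCast, nsmul_eq_mul]
    _ ≤ ∑ j ∈ Finset.Icc 1 N, ∫⁻ p in S j, f p ∂(μ.prod μ) := Finset.sum_le_sum key
    _ ≤ ∫⁻ p in (B N) ×ˢ (B N), f p ∂(μ.prod μ) := hsum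
end
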